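/- arXiv:1708.00673 — 3 statements merged into one kernel-verified Lean document; each statement's English description precedes it below -/
import Mathlib

section
/- Let h_n^{(1)} be the spherical Hankel function of the first kind of order n and z_n^{(1)}(t) = h_n^{(1)}(t) + t (h_n^{(1)})'(t). Then for every n ∈ N and t > 0, |z_n^{(1)}(t)/h_n^{(1)}(t)| ≥ n(n+1)/(2t² + n + 1). -/
open Real Finset

/-- The spherical Hankel function of the first kind of order `n`, given for `t > 0`
by the closed-form finite sum
`h_n^{(1)}(t) = (-i)^{n+1} (e^{it}/t) Σ_{m=0}^n (i^m/(m! (2t)^m)) (n+m)!/(n−m)!`. -/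
noncomputable def sphericalHankel (n : ℕ) (t : ℝ) : ℂ :=
  (-Complex.I) ^ (n + 1) * Complex.exp (Complex.I * t) / t *
    ∑ m ∈ Finset.range (n + 1),
      Complex.I ^ m / ((m.factorial : ℂ) * (2 * (t : ℂ)) ^ m) *
        (((n + m).factorial : ℂ) / ((n - m).factorial : ℂ))

/-- `z_n^{(1)}(t) = h_n^{(1)}(t) + t (h_n^{(1)})'(t)`. -/
noncomputable def zfun (n : ℕ) (t : ℝ) : ℂ :=
  sphericalHankel n t + t * deriv (sphericalHankel n) t

noncomputable def aC (n m : ℕ) : ℝ :=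
  if m ≤ n then ((n+m).factorial : ℝ) / (m.factorial * (n-m).factorial) else 0

noncomputable def AC (n p : ℕ) : ℝ :=
  if p ≤ n then ((n+p).factorial : ℝ) * (2*p).factorial /
      ((p.factorial : ℝ)^2 * (n-p).factorial) else 0

lemma fact_ne (k : ℕ) : ((k.factorial : ℝ)) ≠ 0 :=
  Nat.cast_ne_zero.mpr (Nat.factorial_ne_zero k)

lemma fact_pos (k : ℕ) : (0:ℝ) < (k.factorial : ℝ) :=
  Nat.cast_pos.mpr (Nat.factorial_pos k)

lemma aC_zero (n : ℕ) : aC n 0 = 1 := by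
  simp [aC, Nat.factorial]
  exact Nat.factorial_ne_zero n

lemma AC_zero (n : ℕ) : AC n 0 = 1 := by
  simp [AC, Nat.factorial]
  exact Nat.factorial_ne_zero n

lemma aC_nonneg (n m : ℕ) : 0 ≤ aC n m := by
  unfold aC; split
  · positivity
  · exact le_rfl

lemma AC_nonneg (n p : ℕ) : 0 ≤ AC n p := by
  unfold AC; split
  · positivity
  · exact le_rfl

lemma aC_of_gt {n m : ℕ} (h : n < m) : aC n m = 0 := by
  simp [aC, Nat.not_le.mpr h]

lemma AC_of_gt {n p : ℕ} (h : n < p) : AC n p = 0 := by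
  simp [AC, Nat.not_le.mpr h]

lemma fact_cast_succ (x : ℕ) : (((x+1).factorial : ℝ)) = ((x:ℝ)+1) * x.factorial := by
  rw [Nat.factorial_succ]; push_cast; ring

lemma aC_eq {n m : ℕ} (h : m ≤ n) :
    aC n m = ((n+m).factorial : ℝ) / (m.factorial * (n-m).factorial) := if_pos h

lemma AC_eq {n p : ℕ} (h : p ≤ n) :
    AC n p = ((n+p).factorial : ℝ) * (2*p).factorial /
      ((p.factorial : ℝ)^2 * (n-p).factorial) := if_pos h

lemma AC_step (n p : ℕ) :
    ((p:ℝ)+1) * AC n (p+1) = 2*(2*(p:ℝ)+1)*((n:ℝ)+p+1)*((n:ℝ)-p)*AC n p := by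
  rcases lt_trichotomy n p with h | rfl | h
  · rw [AC_of_gt h, AC_of_gt (by omega)]; ring
  · rw [AC_of_gt (by omega)]
    have : ((n:ℝ) - n) = 0 := sub_self _
    rw [this]; ring
  · obtain ⟨k, rfl⟩ : ∃ k, n = p+1+k := ⟨n-(p+1), by omega⟩
    rw [AC_eq (show p+1 ≤ p+1+k by omega), AC_eq (show p ≤ p+1+k by omega)]
    rw [show p+1+k+(p+1) = (2*p+k+1)+1 by omega, show p+1+k-(p+1) = k by omega,
        show p+1+k+p = (2*p+k)+1 by omega, show p+1+k-p = k+1 by omega,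
        show 2*(p+1) = (2*p+1)+1 by omega]
    rw [fact_cast_succ (2*p+k+1), fact_cast_succ (2*p+k), fact_cast_succ (2*p+1),
        show 2*p+1 = (2*p)+1 by omega, fact_cast_succ (2*p), fact_cast_succ p,
        fact_cast_succ k]
    push_cast
    field_simp
    ring

lemma AC_nstep (n p : ℕ) :
    ((n:ℝ)+p+1) * AC n p = ((n:ℝ)+1-p) * AC (n+1) p := by
  rcases lt_trichotomy n p with h | rfl | h
  · rcases Nat.lt_or_ge (n+1) p with h2 | h2
    · rw [AC_of_gt h, AC_of_gt h2]; ring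
    · have hp : p = n+1 := by omega
      subst hp
      rw [AC_of_gt h]
      have : ((n:ℝ)+1-(n+1:ℕ)) = 0 := by push_cast; ring
      rw [this]; ring
  · -- p = n
    rw [AC_eq (le_refl n), AC_eq (show n ≤ n+1 by omega)]
    rw [show n+n = 2*n by omega, Nat.sub_self, show n+1+n = (2*n)+1 by omega,
        show n+1-n = 1 by omega]
    rw [fact_cast_succ (2*n)]
    push_cast
    simp [Nat.factorial]
    field_simp
    ring
  · obtain ⟨k, rfl⟩ : ∃ k, n = p+k+1 := ⟨n-p-1, by omega⟩
    rw [AC_eq (show p ≤ p+k+1 by omega), AC_eq (show p ≤ p+k+1+1 by omega)]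
    rw [show p+k+1+p = (2*p+k)+1 by omega, show p+k+1-p = k+1 by omega,
        show p+k+1+1+p = (2*p+k+1)+1 by omega, show p+k+1+1-p = k+2 by omega,
        show k+2 = (k+1)+1 by omega]
    rw [fact_cast_succ (2*p+k+1), fact_cast_succ (2*p+k), fact_cast_succ (k+1),
        fact_cast_succ k]
    push_cast
    field_simp
    ring

lemma aC_rec (n m : ℕ) :
    aC (n+2) (m+1) = 2*(2*(n:ℝ)+3) * aC (n+1) m + aC n (m+1) := by
  rcases Nat.lt_or_ge n (m+1) with h | h
  · rcases Nat.lt_or_ge (n+1) m with h2 | h2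
    · rw [aC_of_gt (by omega), aC_of_gt h2, aC_of_gt (by omega)]; ring
    · rcases (show m = n ∨ m = n+1 by omega) with hm | hm
      · -- m = n
        subst hm
        rw [aC_of_gt (show m < m+1 by omega), aC_eq (show m ≤ m+1 by omega),
            aC_eq (show m+1 ≤ m+2 by omega)]
        rw [show m+2+(m+1) = (2*m+2)+1 by omega, show m+2-(m+1) = 1 by omega,
            show m+1+m = (2*m)+1 by omega, show m+1-m = 1 by omega]
        rw [fact_cast_succ (2*m+2), show 2*m+2 = (2*m+1)+1 by omega,
            fact_cast_succ (2*m+1), fact_cast_succ (2*m), fact_cast_succ m]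
        simp only [Nat.factorial_one]
        push_cast
        field_simp
        ring
      · -- m = n+1
        subst hm
        rw [show n+1+1 = n+2 by omega]
        rw [aC_of_gt (show n < n+2 by omega), aC_eq (le_refl (n+1)), aC_eq (le_refl (n+2))]
        rw [Nat.sub_self, Nat.sub_self,
            show n+2+(n+2) = (2*n+3)+1 by omega,
            show n+1+(n+1) = (2*n+1)+1 by omega]
        rw [fact_cast_succ (2*n+3), show 2*n+3 = (2*n+2)+1 by omega,
            fact_cast_succ (2*n+2), show 2*n+2 = (2*n+1)+1 by omega,
            fact_cast_succ (2*n+1), show n+2 = (n+1)+1 by omega,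
            fact_cast_succ (n+1), fact_cast_succ n]
        simp only [Nat.factorial_zero]
        push_cast
        field_simp
        ring
  · -- m+1 ≤ n
    obtain ⟨k, rfl⟩ : ∃ k, n = m+1+k := ⟨n-(m+1), by omega⟩
    rw [aC_eq (show m+1 ≤ m+1+k+2 by omega), aC_eq (show m ≤ m+1+k+1 by omega),
        aC_eq (show m+1 ≤ m+1+k by omega)]
    rw [show m+1+k+2+(m+1) = (2*m+k+3)+1 by omega, show m+1+k+2-(m+1) = (k+1)+1 by omega,
        show m+1+k+1+m = (2*m+k+1)+1 by omega, show m+1+k+1-m = (k+1)+1 by omega,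
        show m+1+k+(m+1) = (2*m+k+1)+1 by omega, show m+1+k-(m+1) = k by omega]
    rw [fact_cast_succ (2*m+k+3), show 2*m+k+3 = (2*m+k+2)+1 by omega,
        fact_cast_succ (2*m+k+2), fact_cast_succ (2*m+k+1),
        fact_cast_succ (k+1), fact_cast_succ k, fact_cast_succ m]
    push_cast
    field_simp
    ring

lemma AC_rec (n p : ℕ) :
    AC (n+2) (p+1) = 4*(2*(n:ℝ)+3)^2 * AC (n+1) p
      - 8*(2*(n:ℝ)+3)*((n:ℝ)+p+1) * AC n p + AC n (p+1) := by
  rcases Nat.lt_or_ge n (p+1) with h | h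
  · rcases Nat.lt_or_ge (n+1) p with h2 | h2
    · rw [AC_of_gt (by omega), AC_of_gt h2, AC_of_gt (by omega), AC_of_gt (by omega)]; ring
    · rcases (show p = n ∨ p = n+1 by omega) with hp | hp
      · -- p = n
        subst hp
        rw [AC_of_gt (show p < p+1 by omega), AC_eq (le_refl p),
            AC_eq (show p ≤ p+1 by omega), AC_eq (show p+1 ≤ p+2 by omega)]
        rw [Nat.sub_self, show p+1-p = 1 by omega, show p+2-(p+1) = 1 by omega,
            show p+2+(p+1) = (2*p+2)+1 by omega, show p+1+p = (2*p)+1 by omega,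
            show p+p = 2*p by omega, show 2*(p+1) = (2*p+1)+1 by omega]
        rw [fact_cast_succ (2*p+2), show 2*p+2 = (2*p+1)+1 by omega,
            fact_cast_succ (2*p+1), fact_cast_succ (2*p), fact_cast_succ p]
        simp only [Nat.factorial_one, Nat.factorial_zero]
        push_cast
        field_simp
        ring
      · -- p = n+1
        subst hp
        rw [show n+1+1 = n+2 by omega]
        rw [AC_of_gt (show n < n+1 by omega), AC_of_gt (show n < n+2 by omega),
            AC_eq (le_refl (n+1)), AC_eq (le_refl (n+2))]
        rw [Nat.sub_self, Nat.sub_self,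
            show n+2+(n+2) = (2*n+3)+1 by omega,
            show n+1+(n+1) = (2*n+1)+1 by omega,
            show 2*(n+2) = (2*n+3)+1 by omega,
            show 2*(n+1) = (2*n+1)+1 by omega]
        rw [fact_cast_succ (2*n+3), show 2*n+3 = (2*n+2)+1 by omega,
            fact_cast_succ (2*n+2), show 2*n+2 = (2*n+1)+1 by omega,
            fact_cast_succ (2*n+1), show n+2 = (n+1)+1 by omega,
            fact_cast_succ (n+1), fact_cast_succ n]
        simp only [Nat.factorial_zero]
        push_cast
        field_simp
        ring
  · -- p+1 ≤ n
    obtain ⟨k, rfl⟩ : ∃ k, n = p+1+k := ⟨n-(p+1), by omega⟩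
    rw [AC_eq (show p+1 ≤ p+1+k+2 by omega), AC_eq (show p ≤ p+1+k+1 by omega),
        AC_eq (show p ≤ p+1+k by omega), AC_eq (show p+1 ≤ p+1+k by omega)]
    rw [show p+1+k+2+(p+1) = (2*p+k+3)+1 by omega, show p+1+k+2-(p+1) = (k+1)+1 by omega,
        show p+1+k+1+p = (2*p+k+1)+1 by omega, show p+1+k+1-p = (k+1)+1 by omega,
        show p+1+k+p = (2*p+k)+1 by omega, show p+1+k-p = k+1 by omega,
        show p+1+k+(p+1) = (2*p+k+1)+1 by omega, show p+1+k-(p+1) = k by omega,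
        show 2*(p+1) = (2*p+1)+1 by omega]
    rw [fact_cast_succ (2*p+k+3), show 2*p+k+3 = (2*p+k+2)+1 by omega,
        fact_cast_succ (2*p+k+2), show 2*p+k+2 = (2*p+k+1)+1 by omega,
        fact_cast_succ (2*p+k+1), fact_cast_succ (2*p+k),
        fact_cast_succ (2*p+1), show 2*p+1 = (2*p)+1 by omega, fact_cast_succ (2*p),
        fact_cast_succ (k+1), fact_cast_succ k, fact_cast_succ p]
    push_cast
    field_simp
    ring

noncomputable def Bf (n : ℕ) (u : ℂ) : ℂ :=
  ∑ m ∈ Finset.range (n+1), (aC n m : ℂ) * u^m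

noncomputable def Pf (n : ℕ) (u : ℂ) : ℂ :=
  ∑ p ∈ Finset.range (n+1), (-1:ℂ)^p * (AC n p : ℂ) * u^(2*p)

noncomputable def Qf (n : ℕ) (u : ℂ) : ℂ :=
  ∑ p ∈ Finset.range (n+1), (-1:ℂ)^p * (4*((n:ℂ)+p+1)) * (AC n p : ℂ) * u^(2*p+1)

lemma Bf_ext (n N : ℕ) (h : n+1 ≤ N) (u : ℂ) :
    ∑ m ∈ range N, (aC n m : ℂ) * u^m = Bf n u := by
  rw [Bf]
  symm
  apply Finset.sum_subset (by intro x hx; simp only [Finset.mem_range] at *; omega)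
  intro x hx hnx
  simp only [Finset.mem_range] at hx hnx
  rw [aC_of_gt (by omega)]
  simp

lemma Pf_ext (n N : ℕ) (h : n+1 ≤ N) (u : ℂ) :
    ∑ p ∈ range N, (-1:ℂ)^p * (AC n p : ℂ) * u^(2*p) = Pf n u := by
  rw [Pf]
  symm
  apply Finset.sum_subset (by intro x hx; simp only [Finset.mem_range] at *; omega)
  intro x hx hnx
  simp only [Finset.mem_range] at hx hnx
  rw [AC_of_gt (by omega)]
  simp

lemma Qf_ext (n N : ℕ) (h : n+1 ≤ N) (u : ℂ) :
    ∑ p ∈ range N, (-1:ℂ)^p * (4*((n:ℂ)+p+1)) * (AC n p : ℂ) * u^(2*p+1) = Qf n u := by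
  rw [Qf]
  symm
  apply Finset.sum_subset (by intro x hx; simp only [Finset.mem_range] at *; omega)
  intro x hx hnx
  simp only [Finset.mem_range] at hx hnx
  rw [AC_of_gt (by omega)]
  simp

lemma Bf_rec (n : ℕ) (u : ℂ) :
    Bf (n+2) u = 2*(2*(n:ℂ)+3)*u * Bf (n+1) u + Bf n u := by
  have h1 : Bf (n+2) u
      = ∑ m ∈ range (n+2), (aC (n+2) (m+1) : ℂ) * u^(m+1) + (aC (n+2) 0 : ℂ) * u^0 := by
    rw [Bf]
    exact Finset.sum_range_succ' (fun m => (aC (n+2) m : ℂ) * u^m) (n+2)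
  have h2 : Bf n u
      = ∑ m ∈ range (n+2), (aC n (m+1) : ℂ) * u^(m+1) + (aC n 0 : ℂ) * u^0 := by
    rw [← Bf_ext n (n+3) (by omega) u]
    exact Finset.sum_range_succ' (fun m => (aC n m : ℂ) * u^m) (n+2)
  have h3 : ∀ m, (aC (n+2) (m+1) : ℂ) * u^(m+1)
      = 2*(2*(n:ℂ)+3) * u * ((aC (n+1) m : ℂ) * u^m) + (aC n (m+1) : ℂ) * u^(m+1) := by
    intro m
    have hr := aC_rec n m
    have hc : (aC (n+2) (m+1) : ℂ)
        = 2*(2*(n:ℂ)+3) * (aC (n+1) m : ℂ) + (aC n (m+1) : ℂ) := by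
      have := congrArg (fun x : ℝ => (x : ℂ)) hr
      push_cast at this ⊢
      exact this
    rw [hc]; ring
  rw [h1, h2]
  rw [Finset.sum_congr rfl (fun m _ => h3 m)]
  rw [Finset.sum_add_distrib, ← Finset.mul_sum]
  rw [aC_zero, aC_zero, Bf]
  push_cast
  ring

lemma QPrec (n : ℕ) (u : ℂ) :
    Qf (n+1) u = 4*(2*(n:ℂ)+3)*u * Pf (n+1) u - Qf n u := by
  rw [← Qf_ext n (n+2) (by omega) u, Qf, Pf, Finset.mul_sum, ← Finset.sum_sub_distrib]
  apply Finset.sum_congr rfl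
  intro p _
  have h := AC_nstep n p
  have hcc : ((n:ℂ)+p+1) * (AC n p : ℂ) = ((n:ℂ)+1-p) * (AC (n+1) p : ℂ) := by
    have := congrArg (fun x : ℝ => (x : ℂ)) h
    push_cast at this ⊢
    exact this
  push_cast
  linear_combination ((-1:ℂ)^p * 4 * u^(2*p+1)) * hcc

lemma Prec (n : ℕ) (u : ℂ) :
    Pf (n+2) u = -4*(2*(n:ℂ)+3)^2*u^2 * Pf (n+1) u
      + 2*(2*(n:ℂ)+3)*u * Qf n u + Pf n u := by
  have hP2 : Pf (n+2) u
      = ∑ p ∈ range (n+2), (-1:ℂ)^(p+1) * (AC (n+2) (p+1) : ℂ) * u^(2*(p+1))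
        + (-1:ℂ)^0 * (AC (n+2) 0 : ℂ) * u^(2*0) := by
    rw [Pf]
    exact Finset.sum_range_succ' (fun p => (-1:ℂ)^p * (AC (n+2) p : ℂ) * u^(2*p)) (n+2)
  have hPn : Pf n u
      = ∑ p ∈ range (n+2), (-1:ℂ)^(p+1) * (AC n (p+1) : ℂ) * u^(2*(p+1))
        + (-1:ℂ)^0 * (AC n 0 : ℂ) * u^(2*0) := by
    rw [← Pf_ext n (n+3) (by omega) u]
    exact Finset.sum_range_succ' (fun p => (-1:ℂ)^p * (AC n p : ℂ) * u^(2*p)) (n+2)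
  have hQ : Qf n u
      = ∑ p ∈ range (n+2), (-1:ℂ)^p * (4*((n:ℂ)+p+1)) * (AC n p : ℂ) * u^(2*p+1) :=
    (Qf_ext n (n+2) (by omega) u).symm
  have key : ∀ p ∈ range (n+2),
      (-1:ℂ)^(p+1) * (AC (n+2) (p+1) : ℂ) * u^(2*(p+1))
      = (4*(2*(n:ℂ)+3)^2*u^2) * ((-1:ℂ)^(p+1) * (AC (n+1) p : ℂ) * u^(2*p))
        + 2*(2*(n:ℂ)+3)*u * ((-1:ℂ)^p * (4*((n:ℂ)+p+1)) * (AC n p : ℂ) * u^(2*p+1))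
        + (-1:ℂ)^(p+1) * (AC n (p+1) : ℂ) * u^(2*(p+1)) := by
    intro p _
    have hr := AC_rec n p
    have hcc : (AC (n+2) (p+1) : ℂ)
        = 4*(2*(n:ℂ)+3)^2 * (AC (n+1) p : ℂ)
          - 8*(2*(n:ℂ)+3)*((n:ℂ)+p+1) * (AC n p : ℂ) + (AC n (p+1) : ℂ) := by
      have := congrArg (fun x : ℝ => (x : ℂ)) hr
      push_cast at this ⊢
      exact this
    linear_combination ((-1:ℂ)^(p+1) * u^(2*(p+1))) * hcc
  rw [hP2, hPn, hQ, Finset.sum_congr rfl key]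
  rw [Finset.sum_add_distrib, Finset.sum_add_distrib, ← Finset.mul_sum, ← Finset.mul_sum]
  have hPn1 : Pf (n+1) u = ∑ p ∈ range (n+2), (-1:ℂ)^p * (AC (n+1) p : ℂ) * u^(2*p) := rfl
  have hneg : ∑ p ∈ range (n+2), (-1:ℂ)^(p+1) * (AC (n+1) p : ℂ) * u^(2*p)
      = - Pf (n+1) u := by
    rw [hPn1, ← Finset.sum_neg_distrib]
    exact Finset.sum_congr rfl (fun p _ => by ring)
  rw [AC_zero, AC_zero, hneg]
  ring

lemma keyInd (n : ℕ) :
    (∀ u : ℂ, Bf n u * Bf n (-u) = Pf n u)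
    ∧ (∀ u : ℂ, Bf (n+1) u * Bf (n+1) (-u) = Pf (n+1) u)
    ∧ (∀ u : ℂ, Bf (n+1) u * Bf n (-u) - Bf (n+1) (-u) * Bf n u = Qf n u) := by
  induction n with
  | zero =>
    have hB0 : ∀ u : ℂ, Bf 0 u = 1 := by
      intro u; simp [Bf, aC_zero]
    have hB1 : ∀ u : ℂ, Bf 1 u = 1 + 2*u := by
      intro u
      have ha : aC 1 1 = 2 := by norm_num [aC, Nat.factorial]
      simp [Bf, Finset.sum_range_succ, aC_zero, ha]
      try ring
    have hA11 : AC 1 1 = 4 := by norm_num [AC, Nat.factorial]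
    refine ⟨?_, ?_, ?_⟩
    · intro u; simp [hB0, Pf, AC_zero]
    · intro u
      rw [hB1, hB1]
      simp [Pf, Finset.sum_range_succ, AC_zero, hA11]
      try ring
    · intro u
      rw [hB1, hB1, hB0, hB0]
      simp [Qf, AC_zero]
      try ring
  | succ n ih =>
    obtain ⟨h1, h2, h3⟩ := ih
    refine ⟨h2, ?_, ?_⟩
    · intro u
      rw [Bf_rec n u, Bf_rec n (-u), Prec n u]
      linear_combination (-4*(2*(n:ℂ)+3)^2*u^2) * h2 u + (2*(2*(n:ℂ)+3)*u) * h3 u + h1 u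
    · intro u
      rw [Bf_rec n u, Bf_rec n (-u), QPrec n u]
      linear_combination (4*(2*(n:ℂ)+3)*u) * h2 u - h3 u

lemma conj_Bf (n : ℕ) (u : ℝ) :
    (starRingEnd ℂ) (Bf n (Complex.I*u)) = Bf n (-(Complex.I*u)) := by
  rw [Bf, Bf, map_sum]
  apply Finset.sum_congr rfl
  intro m _
  rw [map_mul, map_pow, map_mul, Complex.conj_I, Complex.conj_ofReal, Complex.conj_ofReal,
      neg_mul]

lemma prodBf_eq (n : ℕ) (u : ℝ) :
    Bf n (Complex.I*u) * Bf n (-(Complex.I*u))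
      = ((∑ p ∈ Finset.range (n+1), AC n p * u^(2*p) : ℝ) : ℂ) := by
  rw [(keyInd n).1 (Complex.I*u), Pf]
  push_cast
  apply Finset.sum_congr rfl
  intro p _
  have hI : (Complex.I*(u:ℂ))^(2*p) = (-1:ℂ)^p * ((u:ℂ))^(2*p) := by
    rw [mul_pow, pow_mul, Complex.I_sq]
  rw [hI]
  have h1 : (-1:ℂ)^p * ((-1:ℂ)^p) = 1 := by
    rw [← mul_pow]; norm_num
  calc (-1:ℂ)^p * ↑(AC n p) * ((-1:ℂ)^p * ((u:ℂ))^(2*p))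
      = ((-1:ℂ)^p * ((-1:ℂ)^p)) * (↑(AC n p) * ((u:ℂ))^(2*p)) := by ring
    _ = ↑(AC n p) * ((u:ℂ))^(2*p) := by rw [h1]; ring

lemma even_pow_nonneg (u : ℝ) (p : ℕ) : 0 ≤ u^(2*p) := by
  rw [pow_mul]; positivity

lemma G0_pos (n : ℕ) (u : ℝ) :
    (0:ℝ) < ∑ p ∈ Finset.range (n+1), AC n p * u^(2*p) := by
  have h1 : (1:ℝ) ≤ ∑ p ∈ Finset.range (n+1), AC n p * u^(2*p) := by
    have := Finset.single_le_sum (f := fun p => AC n p * u^(2*p))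
      (fun p _ => mul_nonneg (AC_nonneg n p) (even_pow_nonneg u p))
      (Finset.mem_range.mpr (Nat.succ_pos n))
    simpa [AC_zero] using this
  linarith

noncomputable def Tsum (n : ℕ) (u : ℝ) : ℂ :=
  ∑ m ∈ Finset.range (n+1), (m:ℂ) * (aC n m : ℂ) * (Complex.I*u)^m

lemma conj_Tsum (n : ℕ) (u : ℝ) :
    (starRingEnd ℂ) (Tsum n u)
      = ∑ m ∈ Finset.range (n+1), (m:ℂ) * (aC n m : ℂ) * (-(Complex.I*(u:ℂ)))^m := by
  rw [Tsum, map_sum]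
  apply Finset.sum_congr rfl
  intro m _
  rw [map_mul, map_mul, map_pow, map_mul, Complex.conj_I, Complex.conj_ofReal,
      Complex.conj_ofReal, Complex.conj_natCast, neg_mul]

lemma Tre (n : ℕ) (u : ℝ) :
    (Tsum n u * (starRingEnd ℂ) (Bf n (Complex.I*u))).re
      = ∑ p ∈ Finset.range (n+1), (p:ℝ) * AC n p * u^(2*p) := by
  -- derivatives of the two factors
  have e1 : ∀ v:ℝ, Bf n (Complex.I*v)
      = ∑ m ∈ Finset.range (n+1), (aC n m:ℂ) * (Complex.I^m * ((v:ℂ))^m) := by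
    intro v; rw [Bf]; exact Finset.sum_congr rfl (fun m _ => by rw [mul_pow])
  have e2 : ∀ v:ℝ, Bf n (-(Complex.I*v))
      = ∑ m ∈ Finset.range (n+1), (aC n m:ℂ) * ((-Complex.I)^m * ((v:ℂ))^m) := by
    intro v; rw [Bf]
    exact Finset.sum_congr rfl (fun m _ => by rw [show -(Complex.I*(v:ℂ)) = (-Complex.I)*(v:ℂ) by ring, mul_pow])
  have hd1 : HasDerivAt (fun v:ℝ => Bf n (Complex.I*v))
      (∑ m ∈ Finset.range (n+1), (aC n m:ℂ) * (Complex.I^m * ((m:ℂ) * ((u:ℂ))^(m-1)))) u := by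
    have hder : HasDerivAt
        (fun v:ℝ => ∑ m ∈ Finset.range (n+1), (aC n m:ℂ) * (Complex.I^m * ((v:ℂ))^m))
        (∑ m ∈ Finset.range (n+1), (aC n m:ℂ) * (Complex.I^m * ((m:ℂ) * ((u:ℂ))^(m-1)))) u := by
      apply HasDerivAt.fun_sum
      intro m _
      exact (((hasDerivAt_pow m ((u:ℂ))).comp_ofReal).const_mul (Complex.I^m)).const_mul
        ((aC n m : ℂ))
    exact hder.congr_of_eventuallyEq (Filter.Eventually.of_forall (fun v => e1 v))
  have hd2 : HasDerivAt (fun v:ℝ => Bf n (-(Complex.I*v)))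
      (∑ m ∈ Finset.range (n+1), (aC n m:ℂ) * ((-Complex.I)^m * ((m:ℂ) * ((u:ℂ))^(m-1)))) u := by
    have hder : HasDerivAt
        (fun v:ℝ => ∑ m ∈ Finset.range (n+1), (aC n m:ℂ) * ((-Complex.I)^m * ((v:ℂ))^m))
        (∑ m ∈ Finset.range (n+1), (aC n m:ℂ) * ((-Complex.I)^m * ((m:ℂ) * ((u:ℂ))^(m-1)))) u := by
      apply HasDerivAt.fun_sum
      intro m _
      exact (((hasDerivAt_pow m ((u:ℂ))).comp_ofReal).const_mul ((-Complex.I)^m)).const_mul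
        ((aC n m : ℂ))
    exact hder.congr_of_eventuallyEq (Filter.Eventually.of_forall (fun v => e2 v))
  have hdprod := hd1.mul hd2
  -- real-side derivative
  have hg : HasDerivAt (fun v:ℝ => ∑ p ∈ Finset.range (n+1), AC n p * v^(2*p))
      (∑ p ∈ Finset.range (n+1), AC n p * ((2*p:ℕ) * u^(2*p-1))) u := by
    apply HasDerivAt.fun_sum
    intro p _
    exact (hasDerivAt_pow (2*p) u).const_mul (AC n p)
  have hgc := hg.ofReal_comp
  have heq : (fun v:ℝ => Bf n (Complex.I*v) * Bf n (-(Complex.I*v)))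
      = (fun v:ℝ => ((∑ p ∈ Finset.range (n+1), AC n p * v^(2*p) : ℝ) : ℂ)) :=
    funext (fun v => prodBf_eq n v)
  have hgc2 : HasDerivAt (fun v:ℝ => Bf n (Complex.I*v) * Bf n (-(Complex.I*v)))
      (((∑ p ∈ Finset.range (n+1), AC n p * ((2*p:ℕ) * u^(2*p-1)) : ℝ)):ℂ) u := by
    rw [heq]; exact hgc
  have huniq := hdprod.unique hgc2
  -- multiply by u and identify with Tsum
  have hu1 : (u:ℂ) * (∑ m ∈ Finset.range (n+1), (aC n m:ℂ) * (Complex.I^m * ((m:ℂ) * ((u:ℂ))^(m-1))))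
      = Tsum n u := by
    rw [Finset.mul_sum, Tsum]
    apply Finset.sum_congr rfl
    intro m _
    cases m with
    | zero => simp
    | succ k =>
      rw [mul_pow]
      simp only [Nat.succ_sub_one]
      ring
  have hu2 : (u:ℂ) * (∑ m ∈ Finset.range (n+1), (aC n m:ℂ) * ((-Complex.I)^m * ((m:ℂ) * ((u:ℂ))^(m-1))))
      = (starRingEnd ℂ) (Tsum n u) := by
    rw [Finset.mul_sum, conj_Tsum]
    apply Finset.sum_congr rfl
    intro m _
    cases m with
    | zero => simp
    | succ k =>
      rw [show -(Complex.I*(u:ℂ)) = (-Complex.I)*(u:ℂ) by ring, mul_pow]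
      simp only [Nat.succ_sub_one]
      ring
  -- real sum: u * Σ AC (2p) u^(2p-1) = Σ 2p AC u^(2p)
  have hrsum : u * (∑ p ∈ Finset.range (n+1), AC n p * ((2*p:ℕ) * u^(2*p-1)))
      = ∑ p ∈ Finset.range (n+1), 2 * ((p:ℝ) * AC n p * u^(2*p)) := by
    rw [Finset.mul_sum]
    apply Finset.sum_congr rfl
    intro p _
    cases p with
    | zero => simp
    | succ k =>
      have h1 : 2*(k+1) - 1 = 2*k+1 := by omega
      rw [h1, show 2*(k+1) = (2*k+1)+1 by omega]
      push_cast
      rw [pow_succ]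
      ring
  -- combine
  set Tv := Tsum n u with hTv
  set B1 := Bf n (Complex.I * (u:ℝ)) with hB1def
  set B2 := Bf n (-(Complex.I * (u:ℝ))) with hB2def
  have hcB : (starRingEnd ℂ) B1 = B2 := conj_Bf n u
  have hsum : Tv * (starRingEnd ℂ) B1 + (starRingEnd ℂ) (Tv * (starRingEnd ℂ) B1)
      = ((∑ p ∈ Finset.range (n+1), 2 * ((p:ℝ) * AC n p * u^(2*p)) : ℝ) : ℂ) := by
    have hc2 : (starRingEnd ℂ) (Tv * (starRingEnd ℂ) B1) = (starRingEnd ℂ) Tv * B1 := by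
      rw [map_mul, Complex.conj_conj]
    rw [hc2, hcB, ← hu2, ← hu1]
    rw [show ((u:ℂ) * (∑ m ∈ Finset.range (n+1), (aC n m:ℂ) * (Complex.I^m * ((m:ℂ) * ((u:ℂ))^(m-1))))) * B2
        + ((u:ℂ) * (∑ m ∈ Finset.range (n+1), (aC n m:ℂ) * ((-Complex.I)^m * ((m:ℂ) * ((u:ℂ))^(m-1))))) * B1
      = (u:ℂ) * ((∑ m ∈ Finset.range (n+1), (aC n m:ℂ) * (Complex.I^m * ((m:ℂ) * ((u:ℂ))^(m-1)))) * B2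
        + B1 * (∑ m ∈ Finset.range (n+1), (aC n m:ℂ) * ((-Complex.I)^m * ((m:ℂ) * ((u:ℂ))^(m-1))))) by ring]
    rw [huniq, ← Complex.ofReal_mul, hrsum]
  have hadd := Complex.add_conj (Tv * (starRingEnd ℂ) B1)
  rw [hadd] at hsum
  have hre : 2 * (Tv * (starRingEnd ℂ) B1).re
      = ∑ p ∈ Finset.range (n+1), 2 * ((p:ℝ) * AC n p * u^(2*p)) := by
    exact_mod_cast hsum
  have h2 : ∑ p ∈ Finset.range (n+1), 2 * ((p:ℝ) * AC n p * u^(2*p))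
      = 2 * ∑ p ∈ Finset.range (n+1), (p:ℝ) * AC n p * u^(2*p) := by
    rw [Finset.mul_sum]
  rw [h2] at hre
  linarith

noncomputable def hAux (n : ℕ) (s : ℝ) : ℂ :=
  (-Complex.I)^(n+1) * (Complex.exp (Complex.I*(s:ℂ)) *
    ∑ m ∈ Finset.range (n+1),
      (aC n m : ℂ) * Complex.I^m * ((2:ℂ)^m)⁻¹ * (((s:ℂ))^(m+1))⁻¹)

lemma hAux_eq (n : ℕ) (s : ℝ) (hs : s ≠ 0) : sphericalHankel n s = hAux n s := by
  rw [sphericalHankel, hAux, Finset.mul_sum, Finset.mul_sum, Finset.mul_sum]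
  apply Finset.sum_congr rfl
  intro m hm
  have hm' : m ≤ n := by
    have := Finset.mem_range.mp hm; omega
  rw [aC_eq hm']
  have hsc : ((s:ℂ)) ≠ 0 := Complex.ofReal_ne_zero.mpr hs
  have h2 : ((2:ℂ)) ≠ 0 := two_ne_zero
  push_cast
  field_simp
  ring

lemma hasDeriv_hAux (n : ℕ) (t : ℝ) (ht : t ≠ 0) :
    HasDerivAt (hAux n)
      ((-Complex.I)^(n+1) * ((Complex.exp (Complex.I*(t:ℂ)) * Complex.I) *
          (∑ m ∈ Finset.range (n+1),
            (aC n m : ℂ) * Complex.I^m * ((2:ℂ)^m)⁻¹ * (((t:ℂ))^(m+1))⁻¹)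
        + Complex.exp (Complex.I*(t:ℂ)) *
          (∑ m ∈ Finset.range (n+1),
            (aC n m : ℂ) * Complex.I^m * ((2:ℂ)^m)⁻¹ *
              (-(((m:ℂ)+1) * ((t:ℂ))^m) / (((t:ℂ))^(m+1))^2)))) t := by
  have htc : ((t:ℂ)) ≠ 0 := Complex.ofReal_ne_zero.mpr ht
  have hexp : HasDerivAt (fun s:ℝ => Complex.exp (Complex.I*(s:ℂ)))
      (Complex.exp (Complex.I*(t:ℂ)) * Complex.I) t := by
    have h1 : HasDerivAt (fun z:ℂ => Complex.exp (Complex.I*z))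
        (Complex.exp (Complex.I*(t:ℂ)) * Complex.I) ((t:ℂ)) := by
      have := ((hasDerivAt_id ((t:ℂ))).const_mul Complex.I).cexp
      simpa using this
    exact h1.comp_ofReal
  have hsum : HasDerivAt
      (fun s:ℝ => ∑ m ∈ Finset.range (n+1),
        (aC n m : ℂ) * Complex.I^m * ((2:ℂ)^m)⁻¹ * (((s:ℂ))^(m+1))⁻¹)
      (∑ m ∈ Finset.range (n+1),
        (aC n m : ℂ) * Complex.I^m * ((2:ℂ)^m)⁻¹ *
          (-(((m:ℂ)+1) * ((t:ℂ))^m) / (((t:ℂ))^(m+1))^2)) t := by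
    apply HasDerivAt.fun_sum
    intro m _
    have hinv : HasDerivAt (fun s:ℝ => (((s:ℂ))^(m+1))⁻¹)
        (-(((m:ℂ)+1) * ((t:ℂ))^m) / (((t:ℂ))^(m+1))^2) t := by
      have hc : HasDerivAt (fun z:ℂ => (z^(m+1))⁻¹)
          (-(((m:ℂ)+1) * ((t:ℂ))^m) / (((t:ℂ))^(m+1))^2) ((t:ℂ)) := by
        have := (hasDerivAt_pow (m+1) ((t:ℂ))).fun_inv (pow_ne_zero (m+1) htc)
        simpa using this
      exact hc.comp_ofReal
    exact hinv.const_mul ((aC n m : ℂ) * Complex.I^m * ((2:ℂ)^m)⁻¹)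
  exact (hexp.mul hsum).const_mul ((-Complex.I)^(n+1))

lemma sph_repr (n : ℕ) (t : ℝ) (ht : t ≠ 0) :
    sphericalHankel n t
      = ((-Complex.I)^(n+1) * Complex.exp (Complex.I*(t:ℂ)) * ((t:ℂ))⁻¹)
        * Bf n (Complex.I * ((1/(2*t):ℝ):ℂ)) := by
  have htc : ((t:ℂ)) ≠ 0 := Complex.ofReal_ne_zero.mpr ht
  have h2t : (2*(t:ℂ)) ≠ 0 := mul_ne_zero two_ne_zero htc
  have hcast : ((1/(2*t):ℝ):ℂ) = (2*(t:ℂ))⁻¹ := by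
    push_cast
    rw [one_div]
  rw [hAux_eq n t ht, hAux, Bf, Finset.mul_sum, Finset.mul_sum, Finset.mul_sum]
  apply Finset.sum_congr rfl
  intro m _
  rw [hcast, mul_pow, inv_pow]
  field_simp
  ring

lemma zfun_repr (n : ℕ) (t : ℝ) (ht : t ≠ 0) :
    zfun n t = ((-Complex.I)^(n+1) * Complex.exp (Complex.I*(t:ℂ)) * ((t:ℂ))⁻¹)
      * (Complex.I*(t:ℂ) * Bf n (Complex.I * ((1/(2*t):ℝ):ℂ)) - Tsum n (1/(2*t))) := by
  have htc : ((t:ℂ)) ≠ 0 := Complex.ofReal_ne_zero.mpr ht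
  have h2t : (2*(t:ℂ)) ≠ 0 := mul_ne_zero two_ne_zero htc
  have hcast : ((1/(2*t):ℝ):ℂ) = (2*(t:ℂ))⁻¹ := by
    push_cast
    rw [one_div]
  have hD := hasDeriv_hAux n t ht
  have hev : sphericalHankel n =ᶠ[nhds t] hAux n := by
    filter_upwards [eventually_ne_nhds ht] with s hs using hAux_eq n s hs
  have hder := hev.deriv_eq.trans hD.deriv
  have key : (∑ m ∈ Finset.range (n+1),
        (aC n m : ℂ) * Complex.I^m * ((2:ℂ)^m)⁻¹ * (((t:ℂ))^(m+1))⁻¹)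
      + (t:ℂ) * (Complex.I * (∑ m ∈ Finset.range (n+1),
          (aC n m : ℂ) * Complex.I^m * ((2:ℂ)^m)⁻¹ * (((t:ℂ))^(m+1))⁻¹)
        + (∑ m ∈ Finset.range (n+1),
          (aC n m : ℂ) * Complex.I^m * ((2:ℂ)^m)⁻¹ *
            (-(((m:ℂ)+1) * ((t:ℂ))^m) / (((t:ℂ))^(m+1))^2)))
      = ((t:ℂ))⁻¹ * (Complex.I*(t:ℂ) * Bf n (Complex.I * ((1/(2*t):ℝ):ℂ))
          - Tsum n (1/(2*t))) := by
    rw [Bf, Tsum]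
    simp only [Finset.mul_sum, ← Finset.sum_add_distrib, ← Finset.sum_sub_distrib]
    apply Finset.sum_congr rfl
    intro m _
    have hdv : (-(((m:ℂ)+1) * ((t:ℂ))^m) / (((t:ℂ))^(m+1))^2)
        = -(((m:ℂ)+1)) * (((t:ℂ))^(m+2))⁻¹ := by
      rw [div_eq_mul_inv, ← pow_mul, show (m+1)*2 = (m+2)+m by omega, pow_add, mul_inv]
      have hc : (t:ℂ)^m * ((t:ℂ)^m)⁻¹ = 1 := mul_inv_cancel₀ (pow_ne_zero m htc)
      linear_combination (-(((m:ℂ)+1)) * (((t:ℂ))^(m+2))⁻¹) * hc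
    have hw : (t:ℂ) * ((t:ℂ))⁻¹ = 1 := mul_inv_cancel₀ htc
    rw [hdv, hcast]
    simp only [mul_inv, mul_pow, ← inv_pow, pow_succ]
    linear_combination (-(((m:ℂ)+1) * (aC n m:ℂ) * Complex.I^m * (((2:ℂ))⁻¹)^m
      * (((t:ℂ))⁻¹)^m * ((t:ℂ))⁻¹)) * hw
  rw [zfun, hder, hAux_eq n t ht, hAux]
  linear_combination ((-Complex.I)^(n+1) * Complex.exp (Complex.I*(t:ℂ))) * key

lemma core_ineq (n : ℕ) (u : ℝ) :
    2*(n:ℝ)*((n:ℝ)+1)*u^2 * (∑ p ∈ Finset.range (n+1), AC n p * u^(2*p))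
      ≤ (∑ p ∈ Finset.range (n+1), (p:ℝ) * AC n p * u^(2*p)) * (1 + 2*((n:ℝ)+1)*u^2) := by
  have hshift : (∑ p ∈ Finset.range (n+1), (p:ℝ) * AC n p * u^(2*p))
      = ∑ p ∈ Finset.range (n+1), ((p:ℝ)+1) * AC n (p+1) * u^(2*p+2) := by
    rw [Finset.sum_range_succ' (fun p => (p:ℝ) * AC n p * u^(2*p)) n,
        Finset.sum_range_succ (fun p => ((p:ℝ)+1) * AC n (p+1) * u^(2*p+2)) n,
        AC_of_gt (Nat.lt_succ_self n)]
    simp only [Nat.cast_zero, zero_mul, mul_zero, zero_add, add_zero]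
    apply Finset.sum_congr rfl
    intro p _
    push_cast
    ring_nf
  have e1 : (∑ p ∈ Finset.range (n+1), (p:ℝ) * AC n p * u^(2*p)) * (1 + 2*((n:ℝ)+1)*u^2)
      = ∑ p ∈ Finset.range (n+1),
        (((p:ℝ)+1) * AC n (p+1) + 2*((n:ℝ)+1)*(p:ℝ)*AC n p) * u^(2*p+2) := by
    rw [mul_add, mul_one]
    nth_rewrite 1 [hshift]
    rw [Finset.sum_mul, ← Finset.sum_add_distrib]
    apply Finset.sum_congr rfl
    intro p _
    ring
  have e2 : 2*(n:ℝ)*((n:ℝ)+1)*u^2 * (∑ p ∈ Finset.range (n+1), AC n p * u^(2*p))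
      = ∑ p ∈ Finset.range (n+1), (2*(n:ℝ)*((n:ℝ)+1)*AC n p) * u^(2*p+2) := by
    rw [Finset.mul_sum]
    apply Finset.sum_congr rfl
    intro p _
    ring
  rw [e1, e2]
  apply Finset.sum_le_sum
  intro p hp
  have hpn : p ≤ n := by
    have := Finset.mem_range.mp hp; omega
  have hcoef : 2*(n:ℝ)*((n:ℝ)+1)*AC n p
      ≤ ((p:ℝ)+1) * AC n (p+1) + 2*((n:ℝ)+1)*(p:ℝ)*AC n p := by
    rw [AC_step n p]
    have hA := AC_nonneg n p
    have hnp : (0:ℝ) ≤ (n:ℝ) - p := by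
      have : (p:ℝ) ≤ (n:ℝ) := by exact_mod_cast hpn
      linarith
    nlinarith [mul_nonneg (mul_nonneg hA hnp)
      (show (0:ℝ) ≤ 2*(p:ℝ)*(n:ℝ) + 2*(p:ℝ)^2 + 3*(p:ℝ) by positivity)]
  have hpow : (0:ℝ) ≤ u^(2*p+2) := by
    rw [show 2*p+2 = 2*(p+1) by omega]
    exact even_pow_nonneg u (p+1)
  exact mul_le_mul_of_nonneg_right hcoef hpow

/-- For every `n ∈ ℕ` and `t > 0`,
`|z_n^{(1)}(t)/h_n^{(1)}(t)| ≥ n(n+1)/(2t² + n + 1)`. -/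
theorem stmt8 (n : ℕ) (t : ℝ) (ht : 0 < t) :
    (n : ℝ) * (n + 1) / (2 * t ^ 2 + n + 1) ≤ ‖zfun n t / sphericalHankel n t‖ := by
  have htne : t ≠ 0 := ne_of_gt ht
  have htc : ((t:ℂ)) ≠ 0 := Complex.ofReal_ne_zero.mpr htne
  set u : ℝ := 1/(2*t) with hu
  have hupos : 0 < u := by rw [hu]; positivity
  set G0 := ∑ p ∈ Finset.range (n+1), AC n p * u^(2*p) with hG0
  set G1 := ∑ p ∈ Finset.range (n+1), (p:ℝ) * AC n p * u^(2*p) with hG1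
  set Bv := Bf n (Complex.I * (u:ℂ)) with hBv
  set Tv := Tsum n u with hTv
  have hmulconj : Bv * (starRingEnd ℂ) Bv = (G0:ℂ) := by
    rw [hBv, conj_Bf n u]
    exact prodBf_eq n u
  have hnormsq : Complex.normSq Bv = G0 := by
    have h := (Complex.mul_conj Bv).symm.trans hmulconj
    exact_mod_cast h
  have hG0pos : 0 < G0 := G0_pos n u
  have hBnorm2 : ‖Bv‖^2 = G0 := by
    rw [Complex.sq_norm, hnormsq]
  have hBpos : 0 < ‖Bv‖ := by
    have h1 : (0:ℝ) ≤ ‖Bv‖ := norm_nonneg _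
    nlinarith [hBnorm2, hG0pos]
  have hKne : ((-Complex.I)^(n+1) * Complex.exp (Complex.I*(t:ℂ)) * ((t:ℂ))⁻¹) ≠ 0 := by
    apply mul_ne_zero (mul_ne_zero _ _) (inv_ne_zero htc)
    · exact pow_ne_zero _ (neg_ne_zero.mpr Complex.I_ne_zero)
    · exact Complex.exp_ne_zero _
  have hquot : zfun n t / sphericalHankel n t
      = (Complex.I*(t:ℂ) * Bv - Tv) / Bv := by
    rw [zfun_repr n t htne, sph_repr n t htne, ← hu, ← hBv, ← hTv]
    exact mul_div_mul_left _ _ hKne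
  rw [hquot, norm_div]
  have hre : ((Tv - Complex.I*(t:ℂ)*Bv) * (starRingEnd ℂ) Bv).re = G1 := by
    rw [sub_mul, Complex.sub_re]
    have h1 : (Tv * (starRingEnd ℂ) Bv).re = G1 := Tre n u
    have h2 : (Complex.I*(t:ℂ)*Bv * (starRingEnd ℂ) Bv).re = 0 := by
      rw [mul_assoc (Complex.I*(t:ℂ)) Bv _, hmulconj]
      simp [Complex.mul_re]
    rw [h1, h2, sub_zero]
  have hCS : G1 ≤ ‖Complex.I*(t:ℂ)*Bv - Tv‖ * ‖Bv‖ := by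
    calc G1 = ((Tv - Complex.I*(t:ℂ)*Bv) * (starRingEnd ℂ) Bv).re := hre.symm
      _ ≤ ‖(Tv - Complex.I*(t:ℂ)*Bv) * (starRingEnd ℂ) Bv‖ :=
          Complex.re_le_norm _
      _ = ‖(Tv - Complex.I*(t:ℂ)*Bv) * (starRingEnd ℂ) Bv‖ := by
          rfl
      _ = ‖Tv - Complex.I*(t:ℂ)*Bv‖ * ‖(starRingEnd ℂ) Bv‖ := norm_mul _ _
      _ = ‖Complex.I*(t:ℂ)*Bv - Tv‖ * ‖Bv‖ := by
          rw [norm_sub_rev, RCLike.norm_conj]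
  have hstep2 : G1 / G0 ≤ ‖Complex.I*(t:ℂ)*Bv - Tv‖ / ‖Bv‖ := by
    rw [div_le_div_iff₀ hG0pos hBpos]
    have hh := mul_le_mul_of_nonneg_right hCS (norm_nonneg Bv)
    have he : ‖Complex.I*(t:ℂ)*Bv - Tv‖ * ‖Bv‖ * ‖Bv‖
        = ‖Complex.I*(t:ℂ)*Bv - Tv‖ * G0 := by
      rw [mul_assoc, ← sq, hBnorm2]
    linarith
  have hstep1 : (n:ℝ) * ((n:ℝ) + 1) / (2 * t ^ 2 + (n:ℝ) + 1) ≤ G1 / G0 := by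
    have hden : (0:ℝ) < 2*t^2+(n:ℝ)+1 := by positivity
    rw [div_le_div_iff₀ hden hG0pos]
    have hcore := core_ineq n u
    have h1plus : 1 + 2*((n:ℝ)+1)*u^2 = 2*u^2*(2*t^2+(n:ℝ)+1) := by
      rw [hu]
      field_simp
      ring
    have h2u : (0:ℝ) < 2*u^2 := by positivity
    have hfin : 2*u^2*((n:ℝ)*((n:ℝ)+1)*G0) ≤ 2*u^2*(G1*(2*t^2+(n:ℝ)+1)) := by
      calc 2*u^2*((n:ℝ)*((n:ℝ)+1)*G0) = 2*(n:ℝ)*((n:ℝ)+1)*u^2*G0 := by ring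
        _ ≤ G1*(1+2*((n:ℝ)+1)*u^2) := hcore
        _ = 2*u^2*(G1*(2*t^2+(n:ℝ)+1)) := by rw [h1plus]; ring
    have := le_of_mul_le_mul_left hfin h2u
    linarith
  calc (n:ℝ) * ((n:ℝ) + 1) / (2 * t ^ 2 + (n:ℝ) + 1) ≤ G1 / G0 := hstep1
    _ ≤ _ := hstep2
end

section
/- Let n ≥ 1, k > 0, R > 0. If kR ≥ (5/4)n + 1, then |γ_n(kR)| ≥ n/4, where γ_n(t) = n + 1 − t h_{n+1}^{(1)}(t)/h_n^{(1)}(t)} and |t h_{n+1}^{(1)}(t)/h_n^{(1)}(t)| ≥ t for the spherical Hankel functions. Consequently (n + kR)/|γ_n(kR)| ≤ 4(1 + kR/n). -/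
/-- Let `n ≥ 1`, `k > 0`, `R > 0` with `kR ≥ (5/4)n + 1`. With
`γ_n(t) = n + 1 − t h_{n+1}(t)/h_n(t)` and the spherical Hankel bounds
`0 < |h_n(t)| ≤ |h_{n+1}(t)|` for `t > 0`, one has `|γ_n(kR)| ≥ n/4` and consequently
`(n + kR)/|γ_n(kR)| ≤ 4(1 + kR/n)`. -/
theorem stmt10 (h : ℕ → ℝ → ℂ)
    (hpos : ∀ m : ℕ, ∀ t : ℝ, 0 < t → 0 < ‖h m t‖)
    (hmono : ∀ m : ℕ, ∀ t : ℝ, 0 < t → ‖h m t‖ ≤ ‖h (m + 1) t‖)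
    (γ : ℕ → ℝ → ℂ)
    (hγ : γ = fun (m : ℕ) (t : ℝ) => (m : ℂ) + 1 - (t : ℂ) * h (m + 1) t / h m t)
    (n : ℕ) (hn : 1 ≤ n) (k R : ℝ) (hk : 0 < k) (hR : 0 < R)
    (hkR : (5 / 4 : ℝ) * n + 1 ≤ k * R) :
    (n : ℝ) / 4 ≤ ‖γ n (k * R)‖ ∧
    ((n : ℝ) + k * R) / ‖γ n (k * R)‖ ≤ 4 * (1 + k * R / n) := by
  set t := k * R with ht
  have htpos : 0 < t := mul_pos hk hR
  have hnpos : (0:ℝ) < n := by exact_mod_cast hn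
  have h1pos : 0 < ‖h n t‖ := hpos n t htpos
  -- norm of z = t h_{n+1}/h_n
  have hz : t ≤ ‖(t : ℂ) * h (n + 1) t / h n t‖ := by
    rw [norm_div, norm_mul, Complex.norm_real, Real.norm_of_nonneg htpos.le]
    rw [le_div_iff₀ h1pos]
    calc t * ‖h n t‖ ≤ t * ‖h (n+1) t‖ := by
          exact mul_le_mul_of_nonneg_left (hmono n t htpos) htpos.le
      _ = t * ‖h (n+1) t‖ := rfl
  have hnorm : (n : ℝ) / 4 ≤ ‖γ n t‖ := by
    have := norm_sub_norm_le ((t : ℂ) * h (n + 1) t / h n t) ((n : ℂ) + 1)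
    have hn1 : ‖((n : ℂ) + 1)‖ = (n : ℝ) + 1 := by
      have : ((n : ℂ) + 1) = ((n + 1 : ℝ) : ℂ) := by push_cast; ring
      rw [this, Complex.norm_real, Real.norm_of_nonneg (by positivity)]
    have h2 : ‖γ n t‖ = ‖(t : ℂ) * h (n + 1) t / h n t - ((n : ℂ) + 1)‖ := by
      rw [hγ]; simp only
      rw [← norm_neg]; ring_nf
    rw [h2]
    have : t - ((n:ℝ) + 1) ≤ ‖(t : ℂ) * h (n + 1) t / h n t - ((n : ℂ) + 1)‖ := by
      calc t - ((n:ℝ)+1) ≤ ‖(t : ℂ) * h (n + 1) t / h n t‖ - ‖((n : ℂ) + 1)‖ := by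
            rw [hn1]; linarith
        _ ≤ _ := this
    linarith
  refine ⟨hnorm, ?_⟩
  have hγpos : 0 < ‖γ n t‖ := lt_of_lt_of_le (by positivity) hnorm
  rw [div_le_iff₀ hγpos]
  have hnt : 0 ≤ (n:ℝ) + t := by positivity
  calc (n:ℝ) + t ≤ 4 * ((n:ℝ) + t) / n * ((n:ℝ)/4) := by
        field_simp; rfl
      _ ≤ 4 * ((n:ℝ) + t) / n * ‖γ n t‖ := by
        apply mul_le_mul_of_nonneg_left hnorm; positivity
      _ = 4 * (1 + t / n) * ‖γ n t‖ := by field_simp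
end

section
/- Combining the two regimes kR ≥ (5/4)n + 1 and kR ≤ (5/4)n + 1, one obtains (n + kR)/|γ_n(kR)| ≤ 4(1 + (5/2)kR) for all n ≥ 1, k > 0, R > 0, hence |(R/ρ) z_n^{(1)}(kρ)/z_n^{(1)}(kR)| ≤ 4 + 10kR whenever additionally |h_n^{(1)}(kρ)/h_n^{(1)}(kR)| ≤ 1 and |h_{n-1}^{(1)}(t)| ≤ |h_n^{(1)}(t)| for t > 0. -/
/-- Combining the two regimes `kR ≥ (5/4)n+1` and `kR ≤ (5/4)n+1` one gets
`(n + kR)/|γ_n(kR)| ≤ 4(1 + (5/2)kR)` for all `n ≥ 1`, `k > 0`, `R > 0`, and hence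
`|(R/ρ) z_n(kρ)/z_n(kR)| ≤ 4 + 10kR`, under the stated monotonicity and ratio bounds for
the spherical Hankel functions. -/
theorem stmt12 (h : ℕ → ℝ → ℂ)
    (hne : ∀ m : ℕ, ∀ t : ℝ, 0 < t → h m t ≠ 0)
    (z : ℕ → ℝ → ℂ)
    (hz : z = fun (m : ℕ) (t : ℝ) => h m t + (t : ℂ) * deriv (h m) t)
    (γ : ℕ → ℝ → ℂ)
    (hγ : γ = fun (m : ℕ) (t : ℝ) => z m t / h m t)
    (hrec : ∀ m : ℕ, 1 ≤ m → ∀ t : ℝ, 0 < t →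
      deriv (h m) t = -(((m : ℂ) + 1) / (t : ℂ)) * h m t + h (m - 1) t)
    (hmono : ∀ m : ℕ, 1 ≤ m → ∀ t : ℝ, 0 < t → ‖h (m - 1) t‖ ≤ ‖h m t‖)
    (n : ℕ) (hn : 1 ≤ n) (k R ρ : ℝ) (hk : 0 < k) (hR : 0 < R) (hρ : R < ρ)
    (hratio : ‖h n (k * ρ) / h n (k * R)‖ ≤ 1)
    (hb1 : (5 / 4 : ℝ) * n + 1 ≤ k * R →
      ((n : ℝ) + k * R) / ‖γ n (k * R)‖ ≤ 4 * (1 + k * R / n))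
    (hb2 : k * R ≤ (5 / 4 : ℝ) * n + 1 →
      1 / ‖γ n (k * R)‖ ≤ (1 / n) * (1 + (5 / 2 : ℝ) * (k * R))) :
    ((n : ℝ) + k * R) / ‖γ n (k * R)‖ ≤ 4 * (1 + (5 / 2 : ℝ) * (k * R)) ∧
    ‖((R : ℂ) / (ρ : ℂ)) * z n (k * ρ) / z n (k * R)‖ ≤ 4 + 10 * (k * R) := by
  have hρ0 : 0 < ρ := lt_trans hR hρ
  have htR : 0 < k * R := by positivity
  have htρ : 0 < k * ρ := by positivity
  have hn1 : (1 : ℝ) ≤ (n : ℝ) := by exact_mod_cast hn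
  have hnpos : (0 : ℝ) < (n : ℝ) := by linarith
  have hγnn : (0 : ℝ) ≤ ‖γ n (k * R)‖ := norm_nonneg _
  -- Part 1
  have part1 : ((n : ℝ) + k * R) / ‖γ n (k * R)‖ ≤ 4 * (1 + (5 / 2 : ℝ) * (k * R)) := by
    rcases le_total ((5 / 4 : ℝ) * n + 1) (k * R) with hcase | hcase
    · have h1 := hb1 hcase
      have h2 : k * R / n ≤ (5 / 2) * (k * R) := by
        rw [div_le_iff₀ hnpos]
        nlinarith
      linarith
    · have h1 := hb2 hcase
      have h3 : ((n : ℝ) + k * R) / ‖γ n (k * R)‖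
          ≤ ((n : ℝ) + k * R) * ((1 / n) * (1 + (5 / 2 : ℝ) * (k * R))) := by
        rw [div_eq_mul_inv, ← one_div]
        exact mul_le_mul_of_nonneg_left h1 (by positivity)
      have h5 : ((n : ℝ) + k * R) ≤ 4 * n := by nlinarith
      have hE : (0 : ℝ) ≤ 1 + (5 / 2 : ℝ) * (k * R) := by positivity
      have h4 : ((n : ℝ) + k * R) * ((1 / n) * (1 + (5 / 2 : ℝ) * (k * R)))
          ≤ 4 * (1 + (5 / 2 : ℝ) * (k * R)) := by
        have hrw : ((n : ℝ) + k * R) * ((1 / n) * (1 + (5 / 2 : ℝ) * (k * R)))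
            = (((n : ℝ) + k * R) / n) * (1 + (5 / 2 : ℝ) * (k * R)) := by ring
        rw [hrw]
        apply mul_le_mul_of_nonneg_right _ hE
        rw [div_le_iff₀ hnpos]; linarith
      linarith
  refine ⟨part1, ?_⟩
  by_cases hzR : z n (k * R) = 0
  · rw [hzR]
    simp only [div_zero, norm_zero]
    positivity
  -- nonzero case
  have zform : ∀ t : ℝ, 0 < t → z n t = -(n : ℂ) * h n t + (t : ℂ) * h (n - 1) t := by
    intro t ht
    have htc : (t : ℂ) ≠ 0 := by exact_mod_cast ht.ne'
    rw [hz]; simp only []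
    rw [hrec n hn t ht]
    field_simp
    ring
  have zbound : ∀ t : ℝ, 0 < t → ‖z n t‖ ≤ ((n : ℝ) + t) * ‖h n t‖ := by
    intro t ht
    rw [zform t ht]
    calc ‖-(n : ℂ) * h n t + (t : ℂ) * h (n - 1) t‖
        ≤ ‖-(n : ℂ) * h n t‖ + ‖(t : ℂ) * h (n - 1) t‖ := norm_add_le _ _
      _ = (n : ℝ) * ‖h n t‖ + t * ‖h (n - 1) t‖ := by
          rw [norm_mul, norm_mul, norm_neg]
          simp [Complex.norm_real, Real.norm_eq_abs, abs_of_pos ht]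
      _ ≤ (n : ℝ) * ‖h n t‖ + t * ‖h n t‖ := by
          have := hmono n hn t ht
          nlinarith [norm_nonneg (h n t)]
      _ = ((n : ℝ) + t) * ‖h n t‖ := by ring
  set A := ‖z n (k * ρ)‖ with hA
  set B := ‖z n (k * R)‖ with hB
  set G := ‖γ n (k * R)‖ with hG
  set HR := ‖h n (k * R)‖ with hHR
  set Hρ := ‖h n (k * ρ)‖ with hHρ
  have hHRpos : 0 < HR := norm_pos_iff.mpr (hne n (k * R) htR)
  have hBpos : 0 < B := norm_pos_iff.mpr hzR
  have hBG : B = G * HR := by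
    rw [hG, hγ]
    simp only []
    rw [norm_div, div_mul_cancel₀ _ hHRpos.ne']
  have hGpos : 0 < G := by
    rcases lt_or_eq_of_le hγnn with h' | h'
    · exact h'
    · exfalso; rw [← h', zero_mul] at hBG; exact hBpos.ne' hBG
  have hHρHR : Hρ ≤ HR := by
    have := hratio
    rw [norm_div] at this
    rw [div_le_one hHRpos] at this
    exact this
  have hAle : A ≤ ((n : ℝ) + k * ρ) * Hρ := zbound (k * ρ) htρ
  -- norm of LHS
  have hLHS : ‖((R : ℂ) / (ρ : ℂ)) * z n (k * ρ) / z n (k * R)‖ = (R / ρ) * A / B := by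
    rw [norm_div, norm_mul, norm_div, Complex.norm_real, Complex.norm_real,
      Real.norm_eq_abs, Real.norm_eq_abs, abs_of_pos hR, abs_of_pos hρ0]
  rw [hLHS]
  rw [div_le_iff₀ hBpos]
  have key1 : (R / ρ) * A ≤ (R / ρ) * (((n : ℝ) + k * ρ) * Hρ) :=
    mul_le_mul_of_nonneg_left hAle (by positivity)
  have key2 : (R / ρ) * (((n : ℝ) + k * ρ) * Hρ) ≤ ((n : ℝ) + k * R) * Hρ := by
    have hfrac : (R / ρ) * ((n : ℝ) + k * ρ) ≤ (n : ℝ) + k * R := by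
      rw [div_mul_eq_mul_div, div_le_iff₀ hρ0]
      nlinarith
    have : (R / ρ) * (((n : ℝ) + k * ρ) * Hρ) = ((R / ρ) * ((n : ℝ) + k * ρ)) * Hρ := by ring
    rw [this]
    exact mul_le_mul_of_nonneg_right hfrac (norm_nonneg _)
  have key3 : ((n : ℝ) + k * R) * Hρ ≤ ((n : ℝ) + k * R) * HR :=
    mul_le_mul_of_nonneg_left hHρHR (by positivity)
  have key4 : ((n : ℝ) + k * R) * HR ≤ (4 + 10 * (k * R)) * B := by
    rw [hBG]
    have hnk : ((n : ℝ) + k * R) ≤ (4 + 10 * (k * R)) * G := by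
      rw [div_le_iff₀ hGpos] at part1
      nlinarith
    calc ((n : ℝ) + k * R) * HR ≤ ((4 + 10 * (k * R)) * G) * HR :=
          mul_le_mul_of_nonneg_right hnk (le_of_lt hHRpos)
      _ = (4 + 10 * (k * R)) * (G * HR) := by ring
  linarith
end
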